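/- For every loopless matroid M on a finite ground set E, the indicated chromatic number of M equals the chromatic number of M, i.e., χ_i(M) = χ(M). -/

import Mathlib

open Function

/-- A partial coloring `c` (with `none` meaning "uncolored") of the ground set of the
matroid `M`, using colors from `Fin n`, is proper when for each color `j` the elements
of the ground set colored `j` form an independent set of `M`. -/
def ProperColoring {α : Type*} {n : ℕ} (M : Matroid α) (c : α → Option (Fin n)) : Prop :=
  ∀ j : Fin n, M.Indep {x ∈ M.E | c x = some j}

/-- Coloring one more element strictly decreases the number of uncolored elements. -/
theorem uncolored_update_lt {α β : Type*} [DecidableEq α] {E : Set α} (hE : E.Finite)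
    {c : α → Option β} {e : α} (he : e ∈ E) (hce : c e = none) (j : β) :
    {x ∈ E | Function.update c e (some j) x = none}.ncard < {x ∈ E | c x = none}.ncard := by
  apply Set.ncard_lt_ncard
  · constructor
    · rintro x ⟨hxE, hxc⟩
      refine ⟨hxE, ?_⟩
      rcases eq_or_ne x e with rfl | hne
      · simp [Function.update_self] at hxc
      · rwa [Function.update_of_ne hne] at hxc
    · intro hsub
      have := hsub ⟨he, hce⟩
      simp [Function.update_self] at this
  · exact hE.subset (Set.sep_subset _ _)

/-- Alice wins the indicated coloring game on the matroid `M` (with finite ground set) with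
the color set `Fin n`, from the partial coloring `c`; defined by recursion on the number of
uncolored elements: either every element of the ground set is colored, or there is an
uncolored element `e` such that (i) at least one color can be assigned to `e` keeping the
coloring proper, and (ii) for every color whose assignment to `e` keeps the coloring proper,
Alice wins from the extended coloring. -/
def AliceWins {α : Type*} [DecidableEq α] {n : ℕ} (M : Matroid α) (hE : M.E.Finite)
    (c : α → Option (Fin n)) : Prop :=
  (∀ e ∈ M.E, c e ≠ none) ∨
    ∃ e, ∃ _ : e ∈ M.E, ∃ _ : c e = none,
      (∃ j : Fin n, ProperColoring M (Function.update c e (some j))) ∧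
      ∀ j : Fin n, ProperColoring M (Function.update c e (some j)) →
        AliceWins M hE (Function.update c e (some j))
termination_by {x ∈ M.E | c x = none}.ncard
decreasing_by all_goals (apply uncolored_update_lt <;> assumption)

/-- The indicated chromatic number `χᵢ(M)`: the least size `n` of a color set for which
Alice wins the indicated coloring game from the everywhere-uncolored coloring. -/
noncomputable def indicatedChromaticNumber {α : Type*} [DecidableEq α] (M : Matroid α)
    (hE : M.E.Finite) : ℕ :=
  sInf {n : ℕ | AliceWins (n := n) M hE (fun _ => none)}

/-- The chromatic number `χ(M)`: the least `n` such that the ground set of `M` is the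
union of `n` independent sets of `M`. -/
noncomputable def chromaticNumber {α : Type*} (M : Matroid α) : ℕ :=
  sInf {n : ℕ | ∃ V : Fin n → Set α, (∀ i, M.Indep (V i)) ∧ ⋃ i, V i = M.E}

namespace IndGame


open Set

variable {α : Type*} {M : Matroid α} {I J X Y A B T : Set α} {e : α}

/-- The rank of a set: the cardinality of any `Basis'` of it. -/
noncomputable def rk (M : Matroid α) (X : Set α) : ℕ := (M.exists_isBasis' X).choose.ncard

lemma rk_eq_ncard (h : M.IsBasis' I X) : rk M X = I.ncard := by
  rw [rk, Set.ncard_def, Set.ncard_def, (M.exists_isBasis' X).choose_spec.encard_eq_encard h]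

lemma rk_indep (h : M.Indep I) : rk M I = I.ncard := rk_eq_ncard h.isBasis_self.isBasis'

lemma rk_mono (hE : M.E.Finite) (hXY : X ⊆ Y) : rk M X ≤ rk M Y := by
  obtain ⟨I, hI⟩ := M.exists_isBasis' X
  obtain ⟨J, hJ, hIJ⟩ := hI.indep.subset_isBasis'_of_subset (hI.subset.trans hXY)
  rw [rk_eq_ncard hI, rk_eq_ncard hJ]
  exact Set.ncard_le_ncard hIJ (hE.subset hJ.indep.subset_ground)

lemma ncard_le_rk (hE : M.E.Finite) (hJ : M.Indep J) (hJX : J ⊆ X) : J.ncard ≤ rk M X := by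
  obtain ⟨K, hK, hJK⟩ := hJ.subset_isBasis'_of_subset hJX
  rw [rk_eq_ncard hK]
  exact Set.ncard_le_ncard hJK (hE.subset hK.indep.subset_ground)

lemma rk_le_ncard (hE : M.E.Finite) (hXE : X ⊆ M.E) : rk M X ≤ X.ncard := by
  obtain ⟨I, hI⟩ := M.exists_isBasis' X
  rw [rk_eq_ncard hI]
  exact Set.ncard_le_ncard hI.subset (hE.subset hXE)

lemma rk_submod (hE : M.E.Finite) (X Y : Set α) :
    rk M (X ∪ Y) + rk M (X ∩ Y) ≤ rk M X + rk M Y := by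
  obtain ⟨I0, hI0⟩ := M.exists_isBasis' (X ∩ Y)
  obtain ⟨K, hK, hI0K⟩ := hI0.indep.subset_isBasis'_of_subset
    (hI0.subset.trans (inter_subset_left.trans subset_union_left))
  have hKE : K ⊆ M.E := hK.indep.subset_ground
  have hKfin : K.Finite := hE.subset hKE
  have hKXY : K ∩ (X ∩ Y) = I0 := by
    have hI0' : M.IsBasis I0 ((X ∩ Y) ∩ M.E) := Matroid.isBasis'_iff_isBasis_inter_ground.mp hI0
    refine (hI0'.eq_of_subset_indep (hK.indep.subset inter_subset_left)
      (subset_inter hI0K hI0.subset) ?_).symm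
    exact subset_inter inter_subset_right ((inter_subset_left (t := X ∩ Y)).trans hKE)
  have hKsub : K ⊆ X ∪ Y := hK.subset
  have hcard : (K ∩ X).ncard + (K ∩ Y).ncard = K.ncard + I0.ncard := by
    have h1 : (K ∩ X) ∪ (K ∩ Y) = K := by
      rw [← inter_union_distrib_left, inter_eq_left]; exact hKsub
    have h2 : (K ∩ X) ∩ (K ∩ Y) = I0 := by
      rw [← hKXY]; ext x; simp; tauto
    have h3 := Set.ncard_union_add_ncard_inter (K ∩ X) (K ∩ Y)
      (hKfin.inter_of_left X) (hKfin.inter_of_left Y)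
    rw [h1, h2] at h3
    omega
  rw [rk_eq_ncard hK, rk_eq_ncard hI0]
  have hx : (K ∩ X).ncard ≤ rk M X :=
    ncard_le_rk hE (hK.indep.subset inter_subset_left) inter_subset_right
  have hy : (K ∩ Y).ncard ≤ rk M Y :=
    ncard_le_rk hE (hK.indep.subset inter_subset_left) inter_subset_right
  omega

lemma rk_insert_le (hE : M.E.Finite) : rk M (insert e X) ≤ rk M X + 1 := by
  obtain ⟨I, hI⟩ := M.exists_isBasis' X
  obtain ⟨J, hJ, hIJ⟩ := hI.indep.subset_isBasis'_of_subset (hI.subset.trans (subset_insert e X))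
  rw [rk_eq_ncard hI, rk_eq_ncard hJ]
  have hJsub : J ⊆ insert e I := by
    intro x hxJ
    by_contra hx
    simp only [mem_insert_iff, not_or] at hx
    have hxX : x ∈ X ∩ M.E := by
      have h1 := hJ.subset hxJ
      have h2 := hJ.indep.subset_ground hxJ
      rcases h1 with h1 | h1
      · exact absurd h1 hx.1
      · exact ⟨h1, h2⟩
    have hdep : M.Dep (insert x I) :=
      (Matroid.isBasis'_iff_isBasis_inter_ground.mp hI).insert_dep ⟨hxX, hx.2⟩
    exact hdep.not_indep (hJ.indep.subset (insert_subset hxJ hIJ))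
  calc J.ncard ≤ (insert e I).ncard :=
        Set.ncard_le_ncard hJsub ((hE.subset hI.indep.subset_ground).insert e)
  _ ≤ I.ncard + 1 := Set.ncard_insert_le e I

lemma rk_le_of_subset_closure (hE : M.E.Finite) {S : Set α} (h : X ⊆ M.closure S) :
    rk M X ≤ rk M S := by
  obtain ⟨I, hI⟩ := M.exists_isBasis' S
  calc rk M X ≤ rk M (M.closure S) := rk_mono hE h
  _ = I.ncard := rk_eq_ncard hI.isBasis_closure_right.isBasis'
  _ = rk M S := (rk_eq_ncard hI).symm

lemma rk_inter_ground (M : Matroid α) (X : Set α) : rk M X = rk M (X ∩ M.E) := by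
  obtain ⟨I, hI⟩ := M.exists_isBasis' X
  have hI' : M.IsBasis' I (X ∩ M.E) := by
    rw [Matroid.isBasis'_iff_isBasis_inter_ground] at hI ⊢
    rwa [inter_assoc, inter_self] at *
  rw [rk_eq_ncard hI, rk_eq_ncard hI']

lemma insert_indep_of_rk_lt (hE : M.E.Finite) (hI : M.Indep I)
    (hlt : rk M I < rk M (insert e I)) : M.Indep (insert e I) := by
  have heI : e ∉ I := by
    intro h
    rw [insert_eq_of_mem h] at hlt
    exact lt_irrefl _ hlt
  have heE : e ∈ M.E := by
    by_contra heE
    have hset : insert e I ∩ M.E = I ∩ M.E := by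
      ext x; simp only [mem_inter_iff, mem_insert_iff]
      constructor
      · rintro ⟨h1 | h1, h2⟩
        · exact absurd (h1 ▸ h2) heE
        · exact ⟨h1, h2⟩
      · tauto
    rw [rk_inter_ground M (insert e I), hset, ← rk_inter_ground] at hlt
    exact lt_irrefl _ hlt
  refine Matroid.insert_indep_iff.mpr ⟨hI, fun _ => ⟨heE, fun hcl => ?_⟩⟩
  have hsub : insert e I ⊆ M.closure I := insert_subset hcl (M.subset_closure I hI.subset_ground)
  exact absurd (rk_le_of_subset_closure hE hsub) (not_le.mpr hlt)

lemma key_contradiction (hE : M.E.Finite) (hA : A ⊆ M.E) (hB : B ⊆ M.E)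
    (hIA : I ⊆ A) (hIB : I ⊆ B) (heI : e ∉ I) (heB : e ∈ B)
    (hind : M.Indep (insert e I)) (hcl : rk M (insert e A) = rk M A)
    (hskew : rk M (A ∪ B) + I.ncard = rk M A + rk M B) : False := by
  have heE : e ∈ M.E := hB heB
  obtain ⟨P, hP, hP1⟩ := hind.subset_isBasis_of_subset (insert_subset_insert hIA)
    (insert_subset heE hA)
  obtain ⟨Q, hQ, hQ1⟩ := hind.subset_isBasis_of_subset (insert_subset heB hIB) hB
  have hPfin : P.Finite := hE.subset hP.indep.subset_ground
  have hQfin : Q.Finite := hE.subset hQ.indep.subset_ground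
  have hPcard : P.ncard = rk M A := by rw [← hcl, rk_eq_ncard hP.isBasis']
  have hQcard : Q.ncard = rk M B := (rk_eq_ncard hQ.isBasis').symm
  have hspan : A ∪ B ⊆ M.closure (P ∪ Q) := by
    refine union_subset ?_ ?_
    · exact (subset_insert e A).trans
        (hP.subset_closure.trans (M.closure_subset_closure subset_union_left))
    · exact hQ.subset_closure.trans (M.closure_subset_closure subset_union_right)
  have h3 : rk M (A ∪ B) ≤ (P ∪ Q).ncard :=
    (rk_le_of_subset_closure hE hspan).trans
      (rk_le_ncard hE (union_subset hP.indep.subset_ground hQ.indep.subset_ground))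
  have h4 : (P ∪ Q).ncard + (P ∩ Q).ncard = P.ncard + Q.ncard :=
    Set.ncard_union_add_ncard_inter P Q hPfin hQfin
  have h5 : I.ncard + 1 ≤ (P ∩ Q).ncard := by
    have hsub : insert e I ⊆ P ∩ Q := subset_inter hP1 hQ1
    have hle := Set.ncard_le_ncard hsub (hPfin.inter_of_left Q)
    rwa [Set.ncard_insert_of_notMem heI (hE.subset (hIA.trans hA))] at hle
  omega



open Set

variable {α : Type*} {M : Matroid α} {n : ℕ} {c : α → Option (Fin n)} {e : α} {X Y T : Set α}

/-- The class of elements colored `j`. -/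
def CC (M : Matroid α) {n : ℕ} (c : α → Option (Fin n)) (j : Fin n) : Set α :=
  {x ∈ M.E | c x = some j}

/-- The set of uncolored elements. -/
def UC (M : Matroid α) {n : ℕ} (c : α → Option (Fin n)) : Set α := {x ∈ M.E | c x = none}

lemma properColoring_iff : ProperColoring M c ↔ ∀ j, M.Indep (CC M c j) := Iff.rfl

lemma CC_subset_ground (j : Fin n) : CC M c j ⊆ M.E := sep_subset _ _

lemma UC_subset_ground : UC M c ⊆ M.E := sep_subset _ _

lemma not_mem_CC_of_none (hce : c e = none) (j : Fin n) : e ∉ CC M c j := by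
  rintro ⟨-, h⟩; rw [hce] at h; cases h

section Update

variable [DecidableEq α]

lemma CC_update_self (he : e ∈ M.E) (j : Fin n) :
    CC M (update c e (some j)) j = insert e (CC M c j) := by
  ext x
  rcases eq_or_ne x e with rfl | hne
  · simp [CC, he]
  · simp [CC, update_of_ne hne, hne]

lemma CC_update_ne (hce : c e = none) {i j : Fin n} (hij : i ≠ j) :
    CC M (update c e (some j)) i = CC M c i := by
  ext x
  simp only [CC, mem_setOf_eq]
  rcases eq_or_ne x e with rfl | hne
  · rw [update_self, hce]
    constructor
    · rintro ⟨h1, h2⟩; exact absurd (Option.some.inj h2).symm hij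
    · rintro ⟨h1, h2⟩; cases h2
  · rw [update_of_ne hne]

lemma UC_update (he : e ∈ M.E) (hce : c e = none) (j : Fin n) :
    UC M (update c e (some j)) = UC M c \ {e} := by
  ext x
  rcases eq_or_ne x e with rfl | hne
  · simp [UC, he]
  · simp [UC, update_of_ne hne, hne]

lemma proper_update_iff (he : e ∈ M.E) (hce : c e = none) (hc : ProperColoring M c) {j : Fin n} :
    ProperColoring M (update c e (some j)) ↔ M.Indep (insert e (CC M c j)) := by
  constructor
  · intro h
    have := h j
    rwa [show {x ∈ M.E | update c e (some j) x = some j} = CC M (update c e (some j)) j from rfl,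
      CC_update_self he] at this
  · intro h i
    show M.Indep (CC M (update c e (some j)) i)
    rcases eq_or_ne i j with rfl | hij
    · rwa [CC_update_self he]
    · rw [CC_update_ne hce hij]; exact hc i

end Update

/-- The sum of the sizes of the color classes. -/
noncomputable def SumI (M : Matroid α) {n : ℕ} (c : α → Option (Fin n)) : ℕ :=
  ∑ j : Fin n, (CC M c j).ncard

/-- The rank sum. -/
noncomputable def Phi (M : Matroid α) {n : ℕ} (c : α → Option (Fin n)) (X : Set α) : ℕ :=
  ∑ j : Fin n, rk M (X ∪ CC M c j)

/-- The submodular-count condition: the invariant Alice maintains. -/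
def Good (M : Matroid α) {n : ℕ} (c : α → Option (Fin n)) : Prop :=
  ∀ X ⊆ UC M c, X.ncard + SumI M c ≤ Phi M c X

/-- A tight set. -/
def Tight (M : Matroid α) {n : ℕ} (c : α → Option (Fin n)) (X : Set α) : Prop :=
  X ⊆ UC M c ∧ X.ncard + SumI M c = Phi M c X

section Update2

variable [DecidableEq α]

lemma SumI_update (hE : M.E.Finite) (he : e ∈ M.E) (hce : c e = none) (j : Fin n) :
    SumI M (update c e (some j)) = SumI M c + 1 := by
  have h1 : ∀ i ∈ Finset.univ.erase j, (CC M (update c e (some j)) i).ncard = (CC M c i).ncard :=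
    fun i hi => by rw [CC_update_ne hce (Finset.mem_erase.mp hi).1]
  have h2 : ∑ i ∈ Finset.univ.erase j, (CC M (update c e (some j)) i).ncard
      + (CC M (update c e (some j)) j).ncard = SumI M (update c e (some j)) :=
    Finset.sum_erase_add _ _ (Finset.mem_univ j)
  have h3 : ∑ i ∈ Finset.univ.erase j, (CC M c i).ncard + (CC M c j).ncard = SumI M c :=
    Finset.sum_erase_add _ _ (Finset.mem_univ j)
  have h4 : (CC M (update c e (some j)) j).ncard = (CC M c j).ncard + 1 := by
    rw [CC_update_self he, Set.ncard_insert_of_notMem (not_mem_CC_of_none hce j)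
      (hE.subset (CC_subset_ground j))]
  rw [Finset.sum_congr rfl h1] at h2
  omega

lemma Phi_update (he : e ∈ M.E) (hce : c e = none) (j : Fin n) (X : Set α) :
    Phi M (update c e (some j)) X + rk M (X ∪ CC M c j)
      = Phi M c X + rk M (insert e (X ∪ CC M c j)) := by
  have h1 : ∀ i ∈ Finset.univ.erase j,
      rk M (X ∪ CC M (update c e (some j)) i) = rk M (X ∪ CC M c i) :=
    fun i hi => by rw [CC_update_ne hce (Finset.mem_erase.mp hi).1]
  have h2 : ∑ i ∈ Finset.univ.erase j, rk M (X ∪ CC M (update c e (some j)) i)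
      + rk M (X ∪ CC M (update c e (some j)) j) = Phi M (update c e (some j)) X :=
    Finset.sum_erase_add _ _ (Finset.mem_univ j)
  have h3 : ∑ i ∈ Finset.univ.erase j, rk M (X ∪ CC M c i) + rk M (X ∪ CC M c j) = Phi M c X :=
    Finset.sum_erase_add _ _ (Finset.mem_univ j)
  have h4 : X ∪ CC M (update c e (some j)) j = insert e (X ∪ CC M c j) := by
    rw [CC_update_self he, union_insert]
  rw [Finset.sum_congr rfl h1, h4] at h2
  omega

end Update2

lemma UC_finite (hE : M.E.Finite) : (UC M c).Finite := hE.subset UC_subset_ground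

lemma tight_union_inter (hE : M.E.Finite) (hG : Good M c) (hX : Tight M c X) (hY : Tight M c Y) :
    Tight M c (X ∪ Y) ∧ Tight M c (X ∩ Y) := by
  have hXf : X.Finite := (UC_finite hE).subset hX.1
  have hYf : Y.Finite := (UC_finite hE).subset hY.1
  have hsub : Phi M c (X ∪ Y) + Phi M c (X ∩ Y) ≤ Phi M c X + Phi M c Y := by
    rw [Phi, Phi, Phi, Phi, ← Finset.sum_add_distrib, ← Finset.sum_add_distrib]
    refine Finset.sum_le_sum fun i _ => ?_
    have e1 : (X ∪ CC M c i) ∪ (Y ∪ CC M c i) = (X ∪ Y) ∪ CC M c i := by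
      ext x; simp only [mem_union]; tauto
    have e2 : (X ∪ CC M c i) ∩ (Y ∪ CC M c i) = (X ∩ Y) ∪ CC M c i := by
      ext x; simp only [mem_union, mem_inter_iff]; tauto
    have := rk_submod (M := M) hE (X ∪ CC M c i) (Y ∪ CC M c i)
    rwa [e1, e2] at this
  have hc1 := hG (X ∪ Y) (union_subset hX.1 hY.1)
  have hc2 := hG (X ∩ Y) ((inter_subset_left).trans hX.1)
  have hcard := Set.ncard_union_add_ncard_inter X Y hXf hYf
  have hX2 := hX.2; have hY2 := hY.2
  exact ⟨⟨union_subset hX.1 hY.1, by omega⟩, ⟨(inter_subset_left).trans hX.1, by omega⟩⟩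

lemma skew_eq (hE : M.E.Finite) (hc : ProperColoring M c) (hG : Good M c) (hX : Tight M c X) (hT : Tight M c T)
    (hdisj : X ∩ T = ∅) (j : Fin n) :
    rk M ((X ∪ T) ∪ CC M c j) + (CC M c j).ncard
      = rk M (X ∪ CC M c j) + rk M (T ∪ CC M c j) := by
  have hXf : X.Finite := (UC_finite hE).subset hX.1
  have hTf : T.Finite := (UC_finite hE).subset hT.1
  have hXT : Tight M c (X ∪ T) := (tight_union_inter hE hG hX hT).1
  have hdisj' : ∀ x, x ∈ X → x ∈ T → False := by
    intro x hx ht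
    have : x ∈ X ∩ T := ⟨hx, ht⟩
    rw [hdisj] at this
    exact this
  have hle : ∀ i ∈ Finset.univ (α := Fin n),
      rk M ((X ∪ T) ∪ CC M c i) + (CC M c i).ncard
        ≤ rk M (X ∪ CC M c i) + rk M (T ∪ CC M c i) := by
    intro i _
    have e1 : (X ∪ CC M c i) ∪ (T ∪ CC M c i) = (X ∪ T) ∪ CC M c i := by
      ext x; simp only [mem_union]; tauto
    have e2 : (X ∪ CC M c i) ∩ (T ∪ CC M c i) = CC M c i := by
      ext x
      simp only [mem_union, mem_inter_iff]
      constructor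
      · rintro ⟨hx | hx, ht | ht⟩
        · exact (hdisj' x hx ht).elim
        · exact ht
        · exact hx
        · exact hx
      · tauto
    have := rk_submod (M := M) hE (X ∪ CC M c i) (T ∪ CC M c i)
    rwa [e1, e2, rk_indep (show M.Indep (CC M c i) from hc i)] at this
  have hsums : ∑ i : Fin n, (rk M (X ∪ CC M c i) + rk M (T ∪ CC M c i))
      = ∑ i : Fin n, (rk M ((X ∪ T) ∪ CC M c i) + (CC M c i).ncard) := by
    rw [Finset.sum_add_distrib, Finset.sum_add_distrib]
    have h1 : ∑ i : Fin n, rk M (X ∪ CC M c i) = Phi M c X := rfl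
    have h2 : ∑ i : Fin n, rk M (T ∪ CC M c i) = Phi M c T := rfl
    have h3 : ∑ i : Fin n, rk M ((X ∪ T) ∪ CC M c i) = Phi M c (X ∪ T) := rfl
    have h4 : ∑ i : Fin n, (CC M c i).ncard = SumI M c := rfl
    rw [h1, h2, h3, h4]
    have hcard : (X ∪ T).ncard = X.ncard + T.ncard :=
      Set.ncard_union_eq (disjoint_iff_inter_eq_empty.mpr hdisj) hXf hTf
    have := hX.2; have := hT.2; have := hXT.2
    omega
  have := (Finset.sum_eq_sum_iff_of_le hle).mp hsums.symm j (Finset.mem_univ j)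
  omega

section Final

variable [DecidableEq α]

lemma good_update (hE : M.E.Finite) (hc : ProperColoring M c) (hG : Good M c)
    (heU : e ∈ UC M c) {j : Fin n} (hj : M.Indep (insert e (CC M c j)))
    (hkey : ∀ X, Tight M c X → X.Nonempty → e ∉ X →
      rk M (insert e (X ∪ CC M c j)) = rk M (X ∪ CC M c j) → False) :
    Good M (update c e (some j)) := by
  obtain ⟨he, hce⟩ := heU
  intro X hX
  rw [UC_update he hce] at hX
  rw [SumI_update hE he hce]
  have hXU : X ⊆ UC M c := hX.trans diff_subset
  have heX : e ∉ X := fun h => (hX h).2 rfl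
  have hGX := hG X hXU
  have hPhiU := Phi_update he hce j X
  by_contra hlt
  push_neg at hlt
  have hmono : rk M (X ∪ CC M c j) ≤ rk M (insert e (X ∪ CC M c j)) :=
    rk_mono hE (subset_insert _ _)
  have htightX : X.ncard + SumI M c = Phi M c X := by omega
  have hclo : rk M (insert e (X ∪ CC M c j)) = rk M (X ∪ CC M c j) := by omega
  rcases X.eq_empty_or_nonempty with rfl | hXne
  · have h1 : rk M (insert e (CC M c j)) = (CC M c j).ncard + 1 := by
      rw [rk_indep hj, Set.ncard_insert_of_notMem (not_mem_CC_of_none hce j)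
        (hE.subset (CC_subset_ground j))]
    have h2 : rk M (CC M c j) = (CC M c j).ncard := rk_indep (show M.Indep (CC M c j) from hc j)
    rw [empty_union] at hclo
    omega
  · exact hkey X ⟨hXU, htightX⟩ hXne heX hclo

lemma exists_safe (hE : M.E.Finite) (hc : ProperColoring M c) (hG : Good M c)
    (hU : (UC M c).Nonempty) :
    ∃ e ∈ UC M c, ∀ j : Fin n, M.Indep (insert e (CC M c j)) →
      Good M (update c e (some j)) := by
  by_cases hT : ∃ T, Tight M c T ∧ T.Nonempty
  · -- pick a nonempty tight set of minimum cardinality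
    have hsne : {m : ℕ | ∃ T, Tight M c T ∧ T.Nonempty ∧ T.ncard = m}.Nonempty := by
      obtain ⟨T, hT1, hT2⟩ := hT
      exact ⟨T.ncard, T, hT1, hT2, rfl⟩
    obtain ⟨T0, hT0, hT0ne, hT0card⟩ := Nat.sInf_mem hsne
    obtain ⟨e, heT0⟩ := hT0ne
    have heU : e ∈ UC M c := hT0.1 heT0
    refine ⟨e, heU, fun j hj => ?_⟩
    refine good_update hE hc hG heU hj ?_
    intro X htX hXne heX hclo
    have hinter : X ∩ T0 = ∅ := by
      by_contra hne
      rw [← ne_eq, ← nonempty_iff_ne_empty] at hne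
      have htXT0 : Tight M c (X ∩ T0) := (tight_union_inter hE hG htX hT0).2
      have hle : sInf {m : ℕ | ∃ T, Tight M c T ∧ T.Nonempty ∧ T.ncard = m} ≤ (X ∩ T0).ncard :=
        Nat.sInf_le ⟨X ∩ T0, htXT0, hne, rfl⟩
      have heq : X ∩ T0 = T0 :=
        Set.eq_of_subset_of_ncard_le inter_subset_right (by omega)
          ((UC_finite hE).subset hT0.1)
      exact heX (heq.symm ▸ heT0).1
    have hskew := skew_eq hE hc hG htX hT0 hinter j
    have e1 : (X ∪ CC M c j) ∪ (T0 ∪ CC M c j) = (X ∪ T0) ∪ CC M c j := by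
      ext x; simp only [mem_union]; tauto
    refine key_contradiction (I := CC M c j) hE
      (union_subset (htX.1.trans UC_subset_ground) (CC_subset_ground j))
      (union_subset (hT0.1.trans UC_subset_ground) (CC_subset_ground j))
      subset_union_right subset_union_right (not_mem_CC_of_none heU.2 j)
      (Or.inl heT0) hj hclo ?_
    rw [e1]
    exact hskew
  · obtain ⟨e, heU⟩ := hU
    refine ⟨e, heU, fun j hj => good_update hE hc hG heU hj ?_⟩
    intro X htX hXne _ _
    exact hT ⟨X, htX, hXne⟩

lemma aliceWins_of_good (hE : M.E.Finite) :
    ∀ (k : ℕ) (c : α → Option (Fin n)), (UC M c).ncard = k → ProperColoring M c →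
      Good M c → AliceWins M hE c := by
  intro k
  induction k using Nat.strong_induction_on with
  | _ k IH =>
  intro c hk hc hG
  rw [AliceWins]
  rcases (UC M c).eq_empty_or_nonempty with hUe | hUne
  · refine Or.inl fun e heE hne => ?_
    have : e ∈ UC M c := ⟨heE, hne⟩
    rw [hUe] at this
    exact this
  · obtain ⟨e, heU, hsafe⟩ := exists_safe hE hc hG hUne
    obtain ⟨heE, hce⟩ := heU
    refine Or.inr ⟨e, heE, hce, ⟨?_, ?_⟩⟩
    · -- some proper color exists
      have hex : ∃ i : Fin n, rk M (CC M c i) < rk M (insert e (CC M c i)) := by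
        by_contra h
        push_neg at h
        have hG1 := hG {e} (singleton_subset_iff.mpr ⟨heE, hce⟩)
        have hPle : Phi M c {e} ≤ SumI M c := by
          refine Finset.sum_le_sum fun i _ => ?_
          calc rk M ({e} ∪ CC M c i) = rk M (insert e (CC M c i)) := by rw [singleton_union]
          _ ≤ rk M (CC M c i) := h i
          _ = (CC M c i).ncard := rk_indep (show M.Indep (CC M c i) from hc i)
        have hone : ({e} : Set α).ncard = 1 := Set.ncard_singleton e
        omega
      obtain ⟨i, hi⟩ := hex
      have hind := insert_indep_of_rk_lt hE (show M.Indep (CC M c i) from hc i) hi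
      exact ⟨i, (proper_update_iff heE hce hc).mpr hind⟩
    · intro j hPj
      have hj : M.Indep (insert e (CC M c j)) := (proper_update_iff heE hce hc).mp hPj
      have hlt : (UC M (update c e (some j))).ncard < k :=
        hk ▸ uncolored_update_lt hE heE hce j
      exact IH _ hlt _ rfl hPj (hsafe j hj)

lemma exists_full (hE : M.E.Finite) :
    ∀ (k : ℕ) (c : α → Option (Fin n)), (UC M c).ncard = k → ProperColoring M c →
      AliceWins M hE c → ∃ d : α → Option (Fin n), ProperColoring M d ∧ ∀ x ∈ M.E, d x ≠ none := by
  intro k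
  induction k using Nat.strong_induction_on with
  | _ k IH =>
  intro c hk hc hW
  rw [AliceWins] at hW
  rcases hW with hW | ⟨e, heE, hce, ⟨⟨j0, hj0⟩, hall⟩⟩
  · exact ⟨c, hc, hW⟩
  · have hlt : (UC M (update c e (some j0))).ncard < k := hk ▸ uncolored_update_lt hE heE hce j0
    exact IH _ hlt _ rfl hj0 (hall j0 hj0)

end Final

lemma ncard_biUnion_le {ι : Type*} (s : Finset ι) (f : ι → Set α) :
    (⋃ i ∈ s, f i).ncard ≤ ∑ i ∈ s, (f i).ncard := by
  classical
  induction s using Finset.induction_on with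
  | empty => simp
  | insert a s hni ih =>
    rw [Finset.set_biUnion_insert, Finset.sum_insert hni]
    exact (Set.ncard_union_le _ _).trans (by omega)

lemma proper_none : ProperColoring M (fun _ => none : α → Option (Fin n)) := by
  intro j
  have : {x ∈ M.E | (none : Option (Fin n)) = some j} = ∅ := by
    ext x; simp
  rw [this]
  exact M.empty_indep

lemma good_none (hE : M.E.Finite) {V : Fin n → Set α} (hV : ∀ i, M.Indep (V i))
    (hVE : ⋃ i, V i = M.E) : Good M (fun _ => none : α → Option (Fin n)) := by
  intro X hX
  have hCC : ∀ j : Fin n, CC M (fun _ => none) j = ∅ := by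
    intro j; ext x; simp [CC]
  have hSumI : SumI M (fun _ => none : α → Option (Fin n)) = 0 := by
    rw [SumI]
    refine Finset.sum_eq_zero fun i _ => ?_
    rw [hCC]; simp
  have hXE : X ⊆ M.E := hX.trans UC_subset_ground
  have hcover : X ⊆ ⋃ j ∈ Finset.univ (α := Fin n), (X ∩ V j) := by
    intro x hx
    have : x ∈ ⋃ i, V i := hVE ▸ hXE hx
    obtain ⟨j, hj⟩ := mem_iUnion.mp this
    exact mem_iUnion.mpr ⟨j, mem_iUnion.mpr ⟨Finset.mem_univ j, hx, hj⟩⟩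
  have h1 : X.ncard ≤ ∑ j : Fin n, (X ∩ V j).ncard := by
    refine le_trans (Set.ncard_le_ncard hcover ?_) (ncard_biUnion_le _ _)
    exact hE.subset (by simp only [iUnion_subset_iff]; exact fun i _ => inter_subset_left.trans hXE)
  have h2 : ∀ j : Fin n, (X ∩ V j).ncard ≤ rk M (X ∪ CC M (fun _ => none) j) := by
    intro j
    rw [hCC, union_empty]
    exact ncard_le_rk hE ((hV j).subset inter_subset_right) inter_subset_left
  rw [hSumI]
  calc X.ncard + 0 = X.ncard := by omega
  _ ≤ ∑ j : Fin n, (X ∩ V j).ncard := h1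
  _ ≤ ∑ j : Fin n, rk M (X ∪ CC M (fun _ => none) j) := Finset.sum_le_sum fun j _ => h2 j
  _ = Phi M (fun _ => none) X := rfl

end IndGame


/-- For every loopless matroid `M` on a finite ground set, `χᵢ(M) = χ(M)`. -/
theorem indicatedChromaticNumber_eq_chromaticNumber {α : Type*} [DecidableEq α]
    (M : Matroid α) (hE : M.E.Finite) (hloopless : ∀ e ∈ M.E, M.Indep {e}) :
    indicatedChromaticNumber M hE = chromaticNumber M := by
  have hset : {n : ℕ | AliceWins (n := n) M hE (fun _ => none)}
      = {n : ℕ | ∃ V : Fin n → Set α, (∀ i, M.Indep (V i)) ∧ ⋃ i, V i = M.E} := by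
    ext n
    constructor
    · intro hW
      obtain ⟨d, hd, hfull⟩ := IndGame.exists_full hE _ _ rfl IndGame.proper_none hW
      refine ⟨fun j => IndGame.CC M d j, hd, ?_⟩
      apply subset_antisymm
      · exact Set.iUnion_subset fun j => Set.sep_subset _ _
      · intro x hx
        rcases ho : d x with _ | j
        · exact absurd ho (hfull x hx)
        · exact Set.mem_iUnion.mpr ⟨j, hx, ho⟩
    · rintro ⟨V, hV, hVE⟩
      exact IndGame.aliceWins_of_good hE _ _ rfl IndGame.proper_none
        (IndGame.good_none hE hV hVE)
  rw [indicatedChromaticNumber, chromaticNumber, hset]
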